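/- Let K be an odd positive integer, ε ≥ 0, and let m be a real number with m ≥ (K+1)/2. Then for every (p, p') ∈ F(ε,0): Σ_{l=0}^{(K−1)/2} ( e^{mε} b(l;K,p') − b(l;K,p) ) + Σ_{l=(K+1)/2}^{K} ( b(l;K,p) − e^{mε} b(l;K,p') ) ≤ e^{mε} − 1. (This is the i.i.d. privacy cost objective evaluated at the constant noise function γ ≡ 1; hence when m ≥ (K+1)/2 one may output the exact majority of K i.i.d. ε-differentially-private mechanisms with no added noise while remaining mε-differentially private.) -/

import Mathlib

open Finset

/-- Binomial(K,p) probability mass at `l`. -/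
noncomputable def binomPMF (K : ℕ) (p : ℝ) (l : ℕ) : ℝ :=
  (K.choose l : ℝ) * p ^ l * (1 - p) ^ (K - l)

/-- The feasible region `F(ε,0)`: pairs `(p,p') ∈ [0,1]²` consistent with pure
`ε`-differential privacy. -/
def Feas0 (ε p p' : ℝ) : Prop :=
  0 ≤ p ∧ p ≤ 1 ∧ 0 ≤ p' ∧ p' ≤ 1 ∧
  p ≤ Real.exp ε * p' ∧ p' ≤ Real.exp ε * p ∧
  1 - p ≤ Real.exp ε * (1 - p') ∧ 1 - p' ≤ Real.exp ε * (1 - p)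

lemma binomPMF_nonneg {n : ℕ} {q : ℝ} (h0 : 0 ≤ q) (h1 : q ≤ 1) (l : ℕ) :
    0 ≤ binomPMF n q l := by
  unfold binomPMF
  have : (0:ℝ) ≤ 1 - q := by linarith
  positivity

lemma sum_binomPMF (n : ℕ) (q : ℝ) :
    ∑ l ∈ range (n + 1), binomPMF n q l = 1 := by
  calc ∑ l ∈ range (n + 1), binomPMF n q l
      = ∑ l ∈ range (n + 1), q ^ l * (1 - q) ^ (n - l) * (n.choose l : ℝ) := by
        apply Finset.sum_congr rfl
        intro l _
        unfold binomPMF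
        ring
    _ = (q + (1 - q)) ^ n := (add_pow q (1 - q) n).symm
    _ = 1 := by norm_num

/-- `C(n-d, y-d) ≤ C(n, y)` for `d ≤ y ≤ n`. -/
lemma choose_sub_le (d : ℕ) : ∀ n y : ℕ, d ≤ y → y ≤ n →
    (n - d).choose (y - d) ≤ n.choose y := by
  induction d with
  | zero => intro n y _ _; simp
  | succ d ih =>
    intro n y hd hy
    obtain ⟨y', rfl⟩ : ∃ y', y = y' + 1 := ⟨y - 1, by omega⟩
    obtain ⟨n', rfl⟩ : ∃ n', n = n' + 1 := ⟨n - 1, by omega⟩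
    have h1 : n' + 1 - (d + 1) = n' - d := by omega
    have h2 : y' + 1 - (d + 1) = y' - d := by omega
    rw [h1, h2]
    calc (n' - d).choose (y' - d) ≤ n'.choose y' := ih n' y' (by omega) (by omega)
      _ ≤ n'.choose y' + n'.choose (y' + 1) := Nat.le_add_right _ _
      _ = (n' + 1).choose (y' + 1) := (Nat.choose_succ_succ n' y').symm

/-- Lower bound on a binomial tail: `s^h ≤ P(Bin(n,s) ≥ h)`. -/
lemma tail_lb {n h : ℕ} (hh : h ≤ n) {s : ℝ} (hs0 : 0 ≤ s) (hs1 : s ≤ 1) :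
    s ^ h ≤ ∑ y ∈ Icc h n, binomPMF n s y := by
  have key : ∑ y ∈ Icc h n, binomPMF n s y
      ≥ ∑ y ∈ Icc h n, ((n - h).choose (y - h) : ℝ) * s ^ y * (1 - s) ^ (n - y) := by
    apply Finset.sum_le_sum
    intro y hy
    simp only [Finset.mem_Icc] at hy
    unfold binomPMF
    have hc : ((n - h).choose (y - h) : ℝ) ≤ (n.choose y : ℝ) := by
      exact_mod_cast choose_sub_le h n y hy.1 hy.2
    have h1s : (0:ℝ) ≤ 1 - s := by linarith
    have : (0:ℝ) ≤ s ^ y * (1 - s) ^ (n - y) := by positivity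
    nlinarith [this, hc]
  have eq1 : ∑ y ∈ Icc h n, ((n - h).choose (y - h) : ℝ) * s ^ y * (1 - s) ^ (n - y)
      = s ^ h * ∑ j ∈ range (n - h + 1), binomPMF (n - h) s j := by
    rw [Finset.mul_sum]
    rw [show Icc h n = Ico h (n + 1) from (Finset.Ico_add_one_right_eq_Icc h n),
      Finset.sum_Ico_eq_sum_range]
    have hr : n + 1 - h = n - h + 1 := by omega
    rw [hr]
    apply Finset.sum_congr rfl
    intro j hj
    simp only [Finset.mem_range] at hj
    have h1 : h + j - h = j := by omega
    have h2 : n - (h + j) = n - h - j := by omega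
    unfold binomPMF
    rw [h1, h2, pow_add]
    ring
  rw [eq1, sum_binomPMF] at key
  linarith

/-- Thinning identity: summing the product of binomial pmfs gives the pmf of the product. -/
lemma master (n y : ℕ) (hy : y ≤ n) (q s : ℝ) :
    ∑ x ∈ Icc y n, binomPMF n q x * binomPMF x s y = binomPMF n (q * s) y := by
  rw [show Icc y n = Ico y (n + 1) from (Finset.Ico_add_one_right_eq_Icc y n),
    Finset.sum_Ico_eq_sum_range]
  have hr : n + 1 - y = n - y + 1 := by omega
  rw [hr]
  have step : ∀ j ∈ range (n - y + 1),
      binomPMF n q (y + j) * binomPMF (y + j) s y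
        = (n.choose y : ℝ) * (q * s) ^ y *
          (((n - y).choose j : ℝ) * (q * (1 - s)) ^ j * (1 - q) ^ (n - y - j)) := by
    intro j hj
    simp only [Finset.mem_range] at hj
    have hjy : y + j ≤ n := by omega
    have hcc : n.choose (y + j) * (y + j).choose y = n.choose y * (n - y).choose j := by
      have := Nat.choose_mul (n := n) (k := y + j) (s := y) (Nat.le_add_right y j)
      simpa [Nat.add_sub_cancel_left] using this
    have h1 : y + j - y = j := by omega
    have h2 : n - (y + j) = n - y - j := by omega
    unfold binomPMF
    rw [h1, h2]
    have hcc' : (n.choose (y + j) : ℝ) * ((y + j).choose y : ℝ)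
        = (n.choose y : ℝ) * ((n - y).choose j : ℝ) := by exact_mod_cast hcc
    rw [pow_add, mul_pow, mul_pow]
    linear_combination (q ^ y * q ^ j * s ^ y * (1 - s) ^ j * (1 - q) ^ (n - y - j)) * hcc'
  rw [Finset.sum_congr rfl step, ← Finset.mul_sum]
  have hbin : ∑ j ∈ range (n - y + 1),
      ((n - y).choose j : ℝ) * (q * (1 - s)) ^ j * (1 - q) ^ (n - y - j)
      = (q * (1 - s) + (1 - q)) ^ (n - y) := by
    rw [add_pow]
    apply Finset.sum_congr rfl
    intro j _
    ring
  rw [hbin]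
  have : q * (1 - s) + (1 - q) = 1 - q * s := by ring
  rw [this]
  unfold binomPMF
  ring

/-- Triangle sum swap. -/
lemma triangle_swap (n h : ℕ) (f : ℕ → ℕ → ℝ) :
    ∑ y ∈ Icc h n, ∑ x ∈ Icc y n, f x y = ∑ x ∈ Icc h n, ∑ y ∈ Icc h x, f x y := by
  have L : ∑ y ∈ Icc h n, ∑ x ∈ Icc y n, f x y
      = ∑ y ∈ Icc h n, ∑ x ∈ Icc h n, if y ≤ x then f x y else 0 := by
    apply Finset.sum_congr rfl
    intro y hy
    simp only [Finset.mem_Icc] at hy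
    rw [← Finset.sum_filter]
    congr 1
    ext x
    simp only [Finset.mem_filter, Finset.mem_Icc]
    omega
  have R : ∑ x ∈ Icc h n, ∑ y ∈ Icc h x, f x y
      = ∑ x ∈ Icc h n, ∑ y ∈ Icc h n, if y ≤ x then f x y else 0 := by
    apply Finset.sum_congr rfl
    intro x hx
    simp only [Finset.mem_Icc] at hx
    rw [← Finset.sum_filter]
    congr 1
    ext y
    simp only [Finset.mem_filter, Finset.mem_Icc]
    omega
  rw [L, R, Finset.sum_comm]

/-- Tail of product parameter, decomposed. -/
lemma tail_decomp (n h : ℕ) (hh : h ≤ n) (q s : ℝ) :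
    ∑ y ∈ Icc h n, binomPMF n (q * s) y
      = ∑ x ∈ Icc h n, binomPMF n q x * (∑ y ∈ Icc h x, binomPMF x s y) := by
  have : ∑ y ∈ Icc h n, binomPMF n (q * s) y
      = ∑ y ∈ Icc h n, ∑ x ∈ Icc y n, binomPMF n q x * binomPMF x s y := by
    apply Finset.sum_congr rfl
    intro y hy
    simp only [Finset.mem_Icc] at hy
    rw [master n y hy.2 q s]
  rw [this, triangle_swap]
  apply Finset.sum_congr rfl
  intro x _
  rw [Finset.mul_sum]

lemma tail_ub {n h : ℕ} {s : ℝ} (hs0 : 0 ≤ s) (hs1 : s ≤ 1) :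
    ∑ y ∈ Icc h n, binomPMF n s y ≤ 1 := by
  have hsub : Icc h n ⊆ range (n + 1) := by
    intro y hy
    simp only [Finset.mem_Icc] at hy
    simp only [Finset.mem_range]
    omega
  calc ∑ y ∈ Icc h n, binomPMF n s y
      ≤ ∑ y ∈ range (n + 1), binomPMF n s y :=
        Finset.sum_le_sum_of_subset_of_nonneg hsub
          (fun y _ _ => binomPMF_nonneg hs0 hs1 y)
    _ = 1 := sum_binomPMF n s

/-- Monotonicity of the binomial tail in the parameter. -/
lemma tail_mono {n h : ℕ} (hh : h ≤ n) {p q : ℝ} (hp0 : 0 ≤ p) (hpq : p ≤ q) (hq1 : q ≤ 1) :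
    ∑ y ∈ Icc h n, binomPMF n p y ≤ ∑ y ∈ Icc h n, binomPMF n q y := by
  rcases eq_or_lt_of_le (le_trans hp0 hpq) with hq0 | hq0
  · have hp : p = 0 := le_antisymm (hq0 ▸ hpq) hp0
    rw [hp, ← hq0]
  · set s := p / q with hs
    have hs0 : 0 ≤ s := div_nonneg hp0 (le_of_lt hq0)
    have hs1 : s ≤ 1 := (div_le_one hq0).mpr hpq
    have hqs : q * s = p := by rw [hs]; field_simp
    have := tail_decomp n h hh q s
    rw [hqs] at this
    rw [this]
    apply Finset.sum_le_sum
    intro x hx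
    simp only [Finset.mem_Icc] at hx
    have hW : ∑ y ∈ Icc h x, binomPMF x s y ≤ 1 := tail_ub hs0 hs1
    have hpmf : 0 ≤ binomPMF n q x :=
      binomPMF_nonneg (le_of_lt hq0) hq1 x
    nlinarith [Finset.sum_le_sum (fun y (_ : y ∈ Icc h x) => le_refl (binomPMF x s y))]

/-- Thinning lower bound: `s^h · T(q) ≤ T(q·s)`. -/
lemma tail_thin_lb {n h : ℕ} (hh : h ≤ n) {q s : ℝ} (hq0 : 0 ≤ q) (hq1 : q ≤ 1)
    (hs0 : 0 ≤ s) (hs1 : s ≤ 1) :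
    s ^ h * ∑ y ∈ Icc h n, binomPMF n q y ≤ ∑ y ∈ Icc h n, binomPMF n (q * s) y := by
  rw [tail_decomp n h hh q s, Finset.mul_sum]
  apply Finset.sum_le_sum
  intro x hx
  simp only [Finset.mem_Icc] at hx
  have hW : s ^ h ≤ ∑ y ∈ Icc h x, binomPMF x s y := tail_lb hx.1 hs0 hs1
  have hpmf : 0 ≤ binomPMF n q x := binomPMF_nonneg hq0 hq1 x
  calc s ^ h * binomPMF n q x = binomPMF n q x * s ^ h := by ring
    _ ≤ binomPMF n q x * ∑ y ∈ Icc h x, binomPMF x s y := by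
        exact mul_le_mul_of_nonneg_left hW hpmf
    _ = binomPMF n q x * ∑ y ∈ Icc h x, binomPMF x s y := rfl

/-- Core tail comparison: if `p ≤ c·p'` with `c ≥ 1`, then `T(p) ≤ c^h · T(p')`. -/
lemma tail_compare {n h : ℕ} (hh : h ≤ n) {p p' c : ℝ} (hc : 1 ≤ c)
    (hp0 : 0 ≤ p) (hp1 : p ≤ 1) (hp'0 : 0 ≤ p') (hp'1 : p' ≤ 1) (hpp : p ≤ c * p') :
    ∑ y ∈ Icc h n, binomPMF n p y ≤ c ^ h * ∑ y ∈ Icc h n, binomPMF n p' y := by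
  have hc0 : 0 < c := lt_of_lt_of_le one_pos hc
  by_cases hcase : c * p' ≤ 1
  · -- q := c * p', s := 1/c
    have hq0 : 0 ≤ c * p' := mul_nonneg (le_of_lt hc0) hp'0
    have hs0 : (0:ℝ) ≤ 1 / c := by positivity
    have hs1 : 1 / c ≤ 1 := by
      rw [div_le_one hc0]; exact hc
    have hqs : c * p' * (1 / c) = p' := by field_simp
    have h1 := tail_thin_lb hh (q := c * p') (s := 1 / c) hq0 hcase hs0 hs1
    rw [hqs] at h1
    have h2 : ∑ y ∈ Icc h n, binomPMF n p y ≤ ∑ y ∈ Icc h n, binomPMF n (c * p') y :=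
      tail_mono hh hp0 hpp hcase
    have hch : (0:ℝ) < c ^ h := by positivity
    have h3 : (1 / c) ^ h = 1 / c ^ h := by
      rw [div_pow, one_pow]
    rw [h3] at h1
    calc ∑ y ∈ Icc h n, binomPMF n p y ≤ ∑ y ∈ Icc h n, binomPMF n (c * p') y := h2
      _ ≤ c ^ h * ∑ y ∈ Icc h n, binomPMF n p' y := by
          rw [div_mul_eq_mul_div, div_le_iff₀ hch] at h1
          linarith [h1]
  · push_neg at hcase
    have h1 : ∑ y ∈ Icc h n, binomPMF n p y ≤ 1 := tail_ub hp0 hp1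
    have h2 : p' ^ h ≤ ∑ y ∈ Icc h n, binomPMF n p' y := tail_lb hh hp'0 hp'1
    have h3 : (1:ℝ) ≤ (c * p') ^ h := by
      have := pow_le_pow_left₀ (by norm_num : (0:ℝ) ≤ 1) (le_of_lt hcase) h
      simpa using this
    calc ∑ y ∈ Icc h n, binomPMF n p y ≤ 1 := h1
      _ ≤ (c * p') ^ h := h3
      _ = c ^ h * p' ^ h := mul_pow c p' h
      _ ≤ c ^ h * ∑ y ∈ Icc h n, binomPMF n p' y := by
          apply mul_le_mul_of_nonneg_left h2 (by positivity)

/-- for large privacy allowance `m ≥ (K+1)/2`, the i.i.d. privacy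
cost objective at the constant noise function `γ ≡ 1` is bounded by
`e^{mε} − 1` on all of `F(ε,0)`: the exact majority of `K` i.i.d.
`ε`-DP mechanisms is `mε`-differentially private. -/
theorem statement5 (K : ℕ) (hK : Odd K) (hKpos : 0 < K)
    (ε m : ℝ) (hε : 0 ≤ ε) (hm : ((K : ℝ) + 1) / 2 ≤ m) :
    ∀ p p' : ℝ, Feas0 ε p p' →
      (∑ l ∈ Finset.range ((K + 1) / 2),
          (Real.exp (m * ε) * binomPMF K p' l - binomPMF K p l))
        + (∑ l ∈ Finset.Icc ((K + 1) / 2) K,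
          (binomPMF K p l - Real.exp (m * ε) * binomPMF K p' l))
        ≤ Real.exp (m * ε) - 1 := by
  intro p p' hF
  obtain ⟨hp0, hp1, hp'0, hp'1, hpp', hp'p, _, _⟩ := hF
  set h := (K + 1) / 2 with hh_def
  obtain ⟨t, ht⟩ := hK
  have hhK : h ≤ K := by omega
  have h2h : 2 * h = K + 1 := by omega
  set E := Real.exp (m * ε) with hE
  set c := Real.exp ε with hc
  have hc1 : 1 ≤ c := Real.one_le_exp hε
  -- key inequality: T(p) ≤ E * T(p')
  have hEc : c ^ h ≤ E := by
    rw [hE, hc, ← Real.exp_nat_mul]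
    apply Real.exp_le_exp.mpr
    have hhm : (h : ℝ) ≤ m := by
      have hcast : (2 : ℝ) * (h : ℝ) = (K : ℝ) + 1 := by exact_mod_cast h2h
      linarith [hm]
    nlinarith [hhm, hε]
  have hT' : 0 ≤ ∑ y ∈ Icc h K, binomPMF K p' y :=
    Finset.sum_nonneg fun y _ => binomPMF_nonneg hp'0 hp'1 y
  have hkey : ∑ y ∈ Icc h K, binomPMF K p y ≤ E * ∑ y ∈ Icc h K, binomPMF K p' y := by
    calc ∑ y ∈ Icc h K, binomPMF K p y
        ≤ c ^ h * ∑ y ∈ Icc h K, binomPMF K p' y :=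
          tail_compare hhK hc1 hp0 hp1 hp'0 hp'1 hpp'
      _ ≤ E * ∑ y ∈ Icc h K, binomPMF K p' y :=
          mul_le_mul_of_nonneg_right hEc hT'
  -- split the full sum
  have split : ∀ r : ℝ, ∑ l ∈ range h, binomPMF K r l + ∑ l ∈ Icc h K, binomPMF K r l = 1 := by
    intro r
    have : ∑ l ∈ Ico 0 h, binomPMF K r l + ∑ l ∈ Ico h (K + 1), binomPMF K r l
        = ∑ l ∈ Ico 0 (K + 1), binomPMF K r l :=
      Finset.sum_Ico_consecutive _ (by omega) (by omega)
    rw [show Icc h K = Ico h (K + 1) from (Finset.Ico_add_one_right_eq_Icc h K),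
      Finset.range_eq_Ico, this,
      ← Finset.range_eq_Ico, sum_binomPMF]
  have hsplit_p := split p
  have hsplit_p' := split p'
  rw [Finset.sum_sub_distrib, Finset.sum_sub_distrib, ← Finset.mul_sum, ← Finset.mul_sum]
  have hEA' : E * (∑ l ∈ range h, binomPMF K p' l) = E - E * ∑ l ∈ Icc h K, binomPMF K p' l := by
    linear_combination E * hsplit_p'
  linarith [hkey, hsplit_p, hEA']
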